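/- Let p and q be positive integers and suppose the group G_{p,q} admits no generalized torsion elements. Then there is a group isomorphism from H_{p,q} to G_{p,q} sending τ to t and sending x_n to t^{n} b t^{-n} for every integer n (in particular x_0 is sent to b). -/

import Mathlib

set_option maxHeartbeats 1000000
set_option linter.unusedSectionVars false
set_option linter.unnecessarySimpa false

/-- The set of conjugates `h⁻¹ * g * h` of an element `g` of a group. -/
def conjSet {G : Type*} [Group G] (g : G) : Set G := {x | ∃ h : G, x = h⁻¹ * g * h}

/-- `<<g>>^+`: the subsemigroup generated by all conjugates of `g`. -/
def ggP {G : Type*} [Group G] (g : G) : Subsemigroup G := Subsemigroup.closure (conjSet g)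

/-- A generalized torsion element: a nontrivial element `g` with `1 ∈ <<g>>^+`. -/
def IsGenTorsionElem {G : Type*} [Group G] (g : G) : Prop := g ≠ 1 ∧ (1 : G) ∈ ggP g

/-- `G` admits a generalized torsion element. -/
def HasGenTorsion (G : Type*) [Group G] : Prop := ∃ g : G, IsGenTorsionElem g

/-- The relators of the presentation
`< a, b, t | t a^p t⁻¹ = b⁻¹ a^p, t b^{-q} a⁻¹ t⁻¹ = b^{-q}, [b^q, a^p] = 1 >`,
where `a`, `b`, `t` are the generators `0`, `1`, `2` respectively, and
`[g,h] = g⁻¹ h⁻¹ g h`. -/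
def gpqRels (p q : ℤ) : Set (FreeGroup (Fin 3)) :=
  let a : FreeGroup (Fin 3) := FreeGroup.of 0
  let b : FreeGroup (Fin 3) := FreeGroup.of 1
  let t : FreeGroup (Fin 3) := FreeGroup.of 2
  { t * a ^ p * t⁻¹ * (b⁻¹ * a ^ p)⁻¹,
    t * b ^ (-q) * a⁻¹ * t⁻¹ * (b ^ (-q))⁻¹,
    (b ^ q)⁻¹ * (a ^ p)⁻¹ * b ^ q * a ^ p }

/-- `G_{p,q}`, the fundamental group of the 3-manifold obtained by 0-surgery along the
double twist knot `K_{p,q}`. -/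
abbrev Gpq (p q : ℤ) := PresentedGroup (gpqRels p q)

/-- The relators of the presentation
`< τ, x_n (n ∈ ℤ) | [x_i, x_j] = 1, x_{i+1}^{pq} x_i^{-(2pq+1)} x_{i-1}^{pq} = 1,
τ x_i τ⁻¹ = x_{i+1} >`, where `τ` is the generator `Sum.inl ()` and `x_n` is the
generator `Sum.inr n`. -/
def hpqRels (p q : ℤ) : Set (FreeGroup (Unit ⊕ ℤ)) :=
  let τ : FreeGroup (Unit ⊕ ℤ) := FreeGroup.of (Sum.inl ())
  let X : ℤ → FreeGroup (Unit ⊕ ℤ) := fun n => FreeGroup.of (Sum.inr n)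
  (⋃ i : ℤ, ⋃ j : ℤ, {(X i)⁻¹ * (X j)⁻¹ * X i * X j}) ∪
    (⋃ i : ℤ, {(X (i + 1)) ^ (p * q) * (X i) ^ (-(2 * p * q + 1)) * (X (i - 1)) ^ (p * q)}) ∪
    (⋃ i : ℤ, {τ * X i * τ⁻¹ * (X (i + 1))⁻¹})

/-- The group `H_{p,q}`. -/
abbrev Hpq (p q : ℤ) := PresentedGroup (hpqRels p q)

namespace HisoAux
section GenAux
variable {G : Type*} [Group G]
lemma conj_mem_ggP {c x : G} (hx : x ∈ ggP c) (k : G) : k⁻¹ * x * k ∈ ggP c := by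
  induction hx using Subsemigroup.closure_induction with
  | mem y hy =>
    obtain ⟨h, rfl⟩ := hy
    exact Subsemigroup.subset_closure ⟨h * k, by group⟩
  | mul y z hy hz ihy ihz =>
    have e : k⁻¹ * (y * z) * k = (k⁻¹ * y * k) * (k⁻¹ * z * k) := by group
    rw [e]; exact mul_mem ihy ihz

lemma comm_pow_mem (g h : G) : ∀ n : ℕ, n ≠ 0 →
    g⁻¹ * (h ^ n)⁻¹ * g * h ^ n ∈ ggP (g⁻¹ * h⁻¹ * g * h) := by
  intro n
  induction n with
  | zero => simp
  | succ m ih =>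
    intro _
    rcases Nat.eq_zero_or_pos m with hm | hm
    · subst hm
      simpa using (show g⁻¹ * h⁻¹ * g * h ∈ ggP (g⁻¹ * h⁻¹ * g * h) from
        Subsemigroup.subset_closure (s := conjSet (g⁻¹ * h⁻¹ * g * h))
        (show g⁻¹ * h⁻¹ * g * h ∈ conjSet (g⁻¹ * h⁻¹ * g * h) from ⟨1, by group⟩))
    · have key : g⁻¹ * (h ^ (m+1))⁻¹ * g * h ^ (m+1)
          = (g⁻¹ * h⁻¹ * g * h) * (h⁻¹ * (g⁻¹ * (h ^ m)⁻¹ * g * h ^ m) * h) := by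
        rw [pow_succ]; group
      rw [key]
      exact mul_mem (Subsemigroup.subset_closure ⟨1, by group⟩)
        (conj_mem_ggP (ih hm.ne') h)

lemma commute_of_zpow_commute (hng : ¬ HasGenTorsion G) {g h : G} {n : ℤ}
    (hn : 0 < n) (hc : Commute g (h ^ n)) : Commute g h := by
  by_contra hcom
  apply hng
  refine ⟨g⁻¹ * h⁻¹ * g * h, fun h1 => hcom ?_, ?_⟩
  · have h3 := congrArg (fun z => h * g * z) h1
    simp only [mul_one] at h3
    show g * h = h * g
    rw [← h3]; group
  · lift n to ℕ using hn.le with m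
    have hm : m ≠ 0 := by exact_mod_cast hn.ne'
    have hc' : g * h ^ m = h ^ m * g := by
      have := hc.eq; rwa [zpow_natCast] at this
    have e : g⁻¹ * (h ^ m)⁻¹ * g * h ^ m = 1 := by
      rw [mul_assoc, hc']; group
    rw [← e]
    exact comm_pow_mem g h m hm
end GenAux

lemma mk_rel_one {α : Type*} {rels : Set (FreeGroup α)} {r : FreeGroup α} (h : r ∈ rels) :
    PresentedGroup.mk rels r = 1 :=
  (QuotientGroup.eq_one_iff r).mpr (Subgroup.subset_normalClosure h)

variable (p q : ℤ)

def ta : Gpq p q := PresentedGroup.of 0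
def tb : Gpq p q := PresentedGroup.of 1
def tt : Gpq p q := PresentedGroup.of 2
def xg (i : ℤ) : Gpq p q := tt p q ^ i * tb p q * tt p q ^ (-i)
def ag (i : ℤ) : Gpq p q := tt p q ^ i * ta p q * tt p q ^ (-i)

lemma mk_of {α : Type*} {rels : Set (FreeGroup α)} (x : α) :
    PresentedGroup.mk rels (FreeGroup.of x) = PresentedGroup.of x := rfl

lemma g1 : tt p q * ta p q ^ p * (tt p q)⁻¹ = (tb p q)⁻¹ * ta p q ^ p := by
  have h := mk_rel_one (rels := gpqRels p q)
    (r := FreeGroup.of 2 * FreeGroup.of 0 ^ p * (FreeGroup.of 2)⁻¹ *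
      ((FreeGroup.of 1)⁻¹ * FreeGroup.of 0 ^ p)⁻¹)
    (Set.mem_insert _ _)
  simp only [map_mul, map_zpow, map_inv, mk_of] at h
  exact mul_inv_eq_one.mp h

lemma g2 : tt p q * tb p q ^ (-q) * (ta p q)⁻¹ * (tt p q)⁻¹ = tb p q ^ (-q) := by
  have h := mk_rel_one (rels := gpqRels p q)
    (r := FreeGroup.of 2 * FreeGroup.of 1 ^ (-q) * (FreeGroup.of 0)⁻¹ * (FreeGroup.of 2)⁻¹ *
      (FreeGroup.of 1 ^ (-q))⁻¹)
    (Set.mem_insert_of_mem _ (Set.mem_insert _ _))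
  simp only [map_mul, map_zpow, map_inv, mk_of] at h
  exact mul_inv_eq_one.mp h

lemma g3 : Commute (ta p q ^ p) (tb p q ^ q) := by
  have h := mk_rel_one (rels := gpqRels p q)
    (r := (FreeGroup.of 1 ^ q)⁻¹ * (FreeGroup.of 0 ^ p)⁻¹ * FreeGroup.of 1 ^ q *
      FreeGroup.of 0 ^ p)
    (Set.mem_insert_of_mem _ (Set.mem_insert_of_mem _ rfl))
  simp only [map_mul, map_zpow, map_inv, mk_of] at h
  have h2 : ((PresentedGroup.of (rels := gpqRels p q) 0 ^ p *
        PresentedGroup.of (rels := gpqRels p q) 1 ^ q)⁻¹) *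
      (PresentedGroup.of (rels := gpqRels p q) 1 ^ q *
        PresentedGroup.of (rels := gpqRels p q) 0 ^ p) = 1 := by
    rw [← h]; group
  exact inv_mul_eq_one.mp h2


lemma conj_zpow_neg {G : Type*} [Group G] (a b : G) (i m : ℤ) :
    (a ^ i * b * a ^ (-i)) ^ m = a ^ i * b ^ m * a ^ (-i) := by
  rw [zpow_neg, conj_zpow]

def kg (i : ℤ) : Gpq p q →* Gpq p q := (MulAut.conj (tt p q ^ i)).toMonoidHom

lemma kg_apply (i : ℤ) (u : Gpq p q) : kg p q i u = tt p q ^ i * u * tt p q ^ (-i) := by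
  show MulAut.conj (tt p q ^ i) u = _
  rw [MulAut.conj_apply, zpow_neg]

lemma kg_xg (i j : ℤ) : kg p q i (xg p q j) = xg p q (j + i) := by
  rw [kg_apply]; unfold xg; group

lemma kg_ag (i j : ℤ) : kg p q i (ag p q j) = ag p q (j + i) := by
  rw [kg_apply]; unfold ag; group

lemma xg0 : xg p q 0 = tb p q := by unfold xg; group

lemma ag0 : ag p q 0 = ta p q := by unfold ag; group

lemma xg_zpow (i m : ℤ) : xg p q i ^ m = tt p q ^ i * tb p q ^ m * tt p q ^ (-i) :=
  conj_zpow_neg _ _ i m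

lemma ag_zpow (i m : ℤ) : ag p q i ^ m = tt p q ^ i * ta p q ^ m * tt p q ^ (-i) :=
  conj_zpow_neg _ _ i m

/-- `a_i = x_{i-1}^q x_i^{-q}` -/
lemma d1 (i : ℤ) : ag p q i = xg p q (i - 1) ^ q * xg p q i ^ (-q) := by
  have base : ag p q 0 = xg p q (-1) ^ q * xg p q 0 ^ (-q) := by
    have e3 : ta p q = ((tt p q)⁻¹ *
        (tt p q * tb p q ^ (-q) * (ta p q)⁻¹ * (tt p q)⁻¹) * tt p q)⁻¹ * tb p q ^ (-q) := by
      group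
    rw [g2 p q] at e3
    rw [ag0, xg_zpow, xg_zpow, e3]; group
  have := congrArg (kg p q i) base
  rw [kg_ag, map_mul, map_zpow, map_zpow, kg_xg, kg_xg] at this
  simpa [zero_add, neg_add_eq_sub] using this

/-- `x_i = a_i^p a_{i+1}^{-p}` -/
lemma d2 (i : ℤ) : xg p q i = ag p q i ^ p * ag p q (i + 1) ^ (-p) := by
  have base : xg p q 0 = ag p q 0 ^ p * ag p q 1 ^ (-p) := by
    have e1 : ag p q 1 ^ p = (tb p q)⁻¹ * ta p q ^ p := by
      rw [ag_zpow]
      simpa [zpow_one] using g1 p q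
    have e2 : ag p q 1 ^ (-p) = (ag p q 1 ^ p)⁻¹ := by rw [← zpow_neg]
    rw [xg0, ag0, e2, e1]; group
  have := congrArg (kg p q i) base
  rw [kg_xg, map_mul, map_zpow, map_zpow, kg_ag, kg_ag] at this
  simpa [zero_add, add_comm 1 i] using this

/-- `[x_i^q, a_i^p] = 1` -/
lemma d3 (i : ℤ) : Commute (xg p q i ^ q) (ag p q i ^ p) := by
  have base : Commute (xg p q 0 ^ q) (ag p q 0 ^ p) := by
    rw [xg0, ag0]; exact (g3 p q).symm
  have := base.map (kg p q i)
  rwa [map_zpow, map_zpow, kg_xg, kg_ag, zero_add] at this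


section Steps
variable (hng : ¬ HasGenTorsion (Gpq p q)) (hp : 0 < p) (hq : 0 < q)

include hng hp hq

/-- `[x_i, a_i] = 1` -/
lemma c1 (i : ℤ) : Commute (xg p q i) (ag p q i) := by
  have h3 : Commute (ag p q i ^ p) (xg p q i ^ q) := (d3 p q i).symm
  have h4 : Commute (ag p q i ^ p) (xg p q i) := commute_of_zpow_commute hng hq h3
  exact commute_of_zpow_commute hng hp h4.symm

/-- adjacent conjugates of `b` commute -/
lemma adj (i : ℤ) : Commute (xg p q i) (xg p q (i + 1)) := by
  have hd : ag p q (i + 1) = xg p q i ^ q * xg p q (i + 1) ^ (-q) := by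
    simpa using d1 p q (i + 1)
  have h5 : Commute (xg p q (i + 1)) (ag p q (i + 1) * xg p q (i + 1) ^ q) :=
    (c1 p q hng hp hq (i + 1)).mul_right ((Commute.refl _).zpow_right q)
  have he : ag p q (i + 1) * xg p q (i + 1) ^ q = xg p q i ^ q := by
    rw [hd]; group
  rw [he] at h5
  exact (commute_of_zpow_commute hng hq h5).symm

/-- the key relation `x_i^{pq} x_{i+2}^{pq} = x_{i+1}^{2pq+1}` -/
lemma keyG (i : ℤ) : xg p q i ^ (p * q) * xg p q (i + 2) ^ (p * q)
    = xg p q (i + 1) ^ (2 * (p * q) + 1) := by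
  have hd2 : xg p q (i + 1) = ag p q (i + 1) ^ p * ag p q (i + 2) ^ (-p) := by
    simpa [add_assoc] using d2 p q (i + 1)
  have hd1a : ag p q (i + 1) = xg p q i ^ q * xg p q (i + 1) ^ (-q) := by
    simpa using d1 p q (i + 1)
  have hd1b : ag p q (i + 2) = xg p q (i + 1) ^ q * xg p q (i + 2) ^ (-q) := by
    simpa [show i + 2 - 1 = i + 1 by ring] using d1 p q (i + 2)
  have hca : Commute (xg p q i ^ q) (xg p q (i + 1) ^ (-q)) :=
    (adj p q hng hp hq i).zpow_zpow q (-q)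
  have adj2 : Commute (xg p q (i + 1)) (xg p q (i + 2)) := by
    have := adj p q hng hp hq (i + 1)
    rwa [show i + 1 + 1 = i + 2 by ring] at this
  have hcb : Commute (xg p q (i + 1) ^ q) (xg p q (i + 2) ^ (-q)) :=
    adj2.zpow_zpow q (-q)
  have ea : ag p q (i + 1) ^ p = xg p q i ^ (q * p) * xg p q (i + 1) ^ (-(q * p)) := by
    rw [hd1a, hca.mul_zpow, ← zpow_mul, ← zpow_mul]
    congr 1
    ring
  have eb : ag p q (i + 2) ^ (-p) = xg p q (i + 1) ^ (-(q * p)) * xg p q (i + 2) ^ (q * p) := by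
    rw [hd1b, hcb.mul_zpow, ← zpow_mul, ← zpow_mul]
    congr 1 <;> ring
  have E : xg p q (i + 1) = xg p q i ^ (q * p) * xg p q (i + 1) ^ (-(q * p)) *
      (xg p q (i + 1) ^ (-(q * p)) * xg p q (i + 2) ^ (q * p)) :=
    hd2.trans (by rw [ea, eb])
  have E2 := congrArg (fun z => z * (xg p q (i + 2) ^ (q * p))⁻¹ *
    xg p q (i + 1) ^ (q * p) * xg p q (i + 1) ^ (q * p)) E
  have E3 : xg p q i ^ (q * p) = xg p q (i + 1) * (xg p q (i + 2) ^ (q * p))⁻¹ *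
      xg p q (i + 1) ^ (q * p) * xg p q (i + 1) ^ (q * p) := by
    rw [E2]; group
  have hsw : Commute (xg p q (i + 1) ^ (q * p)) (xg p q (i + 2) ^ (q * p)) :=
    adj2.zpow_zpow _ _
  rw [show (p * q : ℤ) = q * p by ring]
  calc xg p q i ^ (q * p) * xg p q (i + 2) ^ (q * p)
      = xg p q (i + 1) * (xg p q (i + 2) ^ (q * p))⁻¹ * xg p q (i + 1) ^ (q * p) *
        (xg p q (i + 1) ^ (q * p) * xg p q (i + 2) ^ (q * p)) := by rw [E3]; group
    _ = xg p q (i + 1) * (xg p q (i + 2) ^ (q * p))⁻¹ * xg p q (i + 1) ^ (q * p) *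
        (xg p q (i + 2) ^ (q * p) * xg p q (i + 1) ^ (q * p)) := by rw [hsw.eq]
    _ = xg p q (i + 1) * (xg p q (i + 2) ^ (q * p))⁻¹ *
        (xg p q (i + 1) ^ (q * p) * xg p q (i + 2) ^ (q * p)) * xg p q (i + 1) ^ (q * p) := by
        group
    _ = xg p q (i + 1) * (xg p q (i + 2) ^ (q * p))⁻¹ *
        (xg p q (i + 2) ^ (q * p) * xg p q (i + 1) ^ (q * p)) * xg p q (i + 1) ^ (q * p) := by
        rw [hsw.eq]
    _ = xg p q (i + 1) ^ (2 * (q * p) + 1) := by group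

/-- all conjugates of `b` commute -/
lemma commAll (i j : ℤ) : Commute (xg p q i) (xg p q j) := by
  have hN : (0 : ℤ) < p * q := mul_pos hp hq
  have main : ∀ d : ℕ, ∀ i : ℤ, Commute (xg p q i) (xg p q (i + (d : ℤ))) := by
    intro d
    induction d using Nat.strong_induction_on with
    | _ d ih =>
      match d with
      | 0 => intro i; simpa using Commute.refl (xg p q i)
      | 1 => intro i; simpa using adj p q hng hp hq i
      | (k + 2) =>
        intro i
        have h1 : Commute (xg p q (i + ((k : ℤ) + 2))) (xg p q (i + 1)) := by
          have := ih (k + 1) (by omega) (i + 1)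
          have e : i + 1 + ((k : ℤ) + 1) = i + ((k : ℤ) + 2) := by ring
          rw [show ((k + 1 : ℕ) : ℤ) = (k : ℤ) + 1 by push_cast; ring, e] at this
          exact this.symm
        have h2 : Commute (xg p q (i + ((k : ℤ) + 2))) (xg p q (i + 2)) := by
          have := ih k (by omega) (i + 2)
          rw [show i + 2 + (k : ℤ) = i + ((k : ℤ) + 2) by ring] at this
          exact this.symm
        have hx : xg p q i ^ (p * q) = xg p q (i + 1) ^ (2 * (p * q) + 1) *
            xg p q (i + 2) ^ (-(p * q)) := by
          rw [← keyG p q hng hp hq i]; group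
        have hc : Commute (xg p q (i + ((k : ℤ) + 2))) (xg p q i ^ (p * q)) := by
          rw [hx]
          exact (h1.zpow_right _).mul_right (h2.zpow_right _)
        have := commute_of_zpow_commute hng hN hc
        simpa [show ((k + 2 : ℕ) : ℤ) = (k : ℤ) + 2 by push_cast; ring] using this.symm
  rcases le_total i j with h | h
  · have e : ((j - i).toNat : ℤ) = j - i := Int.toNat_of_nonneg (by omega)
    have := main (j - i).toNat i
    rwa [e, show i + (j - i) = j by ring] at this
  · have e : ((i - j).toNat : ℤ) = i - j := Int.toNat_of_nonneg (by omega)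
    have := main (i - j).toNat j
    rw [e, show j + (i - j) = i by ring] at this
    exact this.symm

/-- the polynomial relation in `G` -/
lemma polyG (i : ℤ) : xg p q (i + 1) ^ (p * q) * xg p q i ^ (-(2 * p * q + 1)) *
    xg p q (i - 1) ^ (p * q) = 1 := by
  have hk := keyG p q hng hp hq (i - 1)
  rw [show i - 1 + 2 = i + 1 by ring, show i - 1 + 1 = i by ring] at hk
  have he : xg p q i ^ (-(2 * p * q + 1)) =
      (xg p q (i - 1) ^ (p * q) * xg p q (i + 1) ^ (p * q))⁻¹ := by
    rw [hk, ← zpow_neg]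
    congr 1
    ring
  rw [he]; group

/-- the shift relation in `G` -/
lemma shiftG (i : ℤ) : tt p q * xg p q i * (tt p q)⁻¹ = xg p q (i + 1) := by
  unfold xg; group

end Steps
def tauH : Hpq p q := PresentedGroup.of (Sum.inl ())
def XH (n : ℤ) : Hpq p q := PresentedGroup.of (Sum.inr n)

lemma memH_comm (i j : ℤ) : (FreeGroup.of (Sum.inr i) : FreeGroup (Unit ⊕ ℤ))⁻¹ *
    (FreeGroup.of (Sum.inr j))⁻¹ * FreeGroup.of (Sum.inr i) * FreeGroup.of (Sum.inr j)
    ∈ hpqRels p q :=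
  Set.mem_union_left _ (Set.mem_union_left _
    (Set.mem_iUnion.mpr ⟨i, Set.mem_iUnion.mpr ⟨j, rfl⟩⟩))

lemma memH_poly (i : ℤ) : (FreeGroup.of (Sum.inr (i+1)) : FreeGroup (Unit ⊕ ℤ)) ^ (p * q) *
    FreeGroup.of (Sum.inr i) ^ (-(2 * p * q + 1)) * FreeGroup.of (Sum.inr (i-1)) ^ (p * q)
    ∈ hpqRels p q :=
  Set.mem_union_left _ (Set.mem_union_right _ (Set.mem_iUnion.mpr ⟨i, rfl⟩))

lemma memH_shift (i : ℤ) : (FreeGroup.of (Sum.inl ()) : FreeGroup (Unit ⊕ ℤ)) *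
    FreeGroup.of (Sum.inr i) * (FreeGroup.of (Sum.inl ()))⁻¹ * (FreeGroup.of (Sum.inr (i+1)))⁻¹
    ∈ hpqRels p q :=
  Set.mem_union_right _ (Set.mem_iUnion.mpr ⟨i, rfl⟩)

lemma h1 (i j : ℤ) : Commute (XH p q i) (XH p q j) := by
  have h := mk_rel_one (memH_comm p q i j)
  simp only [map_mul, map_inv, mk_of] at h
  have h2 : ((PresentedGroup.of (rels := hpqRels p q) (Sum.inr j) *
      PresentedGroup.of (rels := hpqRels p q) (Sum.inr i))⁻¹) *
      (PresentedGroup.of (rels := hpqRels p q) (Sum.inr i) *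
      PresentedGroup.of (rels := hpqRels p q) (Sum.inr j)) = 1 := by
    rw [← h]; group
  exact inv_mul_eq_one.mp h2 |>.symm

lemma h2rel (i : ℤ) : XH p q (i+1) ^ (p * q) * XH p q i ^ (-(2 * p * q + 1)) *
    XH p q (i-1) ^ (p * q) = 1 := by
  have h := mk_rel_one (memH_poly p q i)
  simp only [map_mul, map_zpow, mk_of] at h
  exact h

lemma h3 (i : ℤ) : tauH p q * XH p q i * (tauH p q)⁻¹ = XH p q (i+1) := by
  have h := mk_rel_one (memH_shift p q i)
  simp only [map_mul, map_inv, mk_of] at h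
  exact mul_inv_eq_one.mp h

lemma h3' (i : ℤ) : (tauH p q)⁻¹ * XH p q i * tauH p q = XH p q (i-1) := by
  have h := h3 p q (i-1)
  rw [show i - 1 + 1 = i by ring] at h
  rw [← h]; group

lemma h4 (n m : ℤ) : tauH p q ^ n * XH p q m * tauH p q ^ (-n) = XH p q (m + n) := by
  induction n using Int.induction_on with
  | zero => simp
  | succ k ih =>
    have e : tauH p q ^ ((k : ℤ) + 1) * XH p q m * tauH p q ^ (-((k : ℤ) + 1)) =
        tauH p q * (tauH p q ^ (k : ℤ) * XH p q m * tauH p q ^ (-(k : ℤ))) * (tauH p q)⁻¹ := by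
      group
    rw [e, ih, h3, show m + (k : ℤ) + 1 = m + ((k : ℤ) + 1) by ring]
  | pred k ih =>
    have e : tauH p q ^ (-(k : ℤ) - 1) * XH p q m * tauH p q ^ (-(-(k : ℤ) - 1)) =
        (tauH p q)⁻¹ * (tauH p q ^ (-(k : ℤ)) * XH p q m * tauH p q ^ (-(-(k : ℤ)))) *
        tauH p q := by
      group
    rw [e, ih, h3', show m + -(k : ℤ) - 1 = m + (-(k : ℤ) - 1) by ring]


section Iso
variable (hng : ¬ HasGenTorsion (Gpq p q)) (hp : 0 < p) (hq : 0 < q)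

def fphi : Unit ⊕ ℤ → Gpq p q := Sum.elim (fun _ => tt p q) (xg p q)

include hng hp hq in
lemma hphi : ∀ r ∈ hpqRels p q, FreeGroup.lift (fphi p q) r = 1 := by
  intro r hr
  simp only [hpqRels, Set.mem_union, Set.mem_iUnion, Set.mem_singleton_iff] at hr
  rcases hr with (⟨i, j, rfl⟩ | ⟨i, rfl⟩) | ⟨i, rfl⟩
  · simp only [map_mul, map_inv, FreeGroup.lift_apply_of, fphi, Sum.elim_inr]
    have h := (commAll p q hng hp hq i j).eq
    calc (xg p q i)⁻¹ * (xg p q j)⁻¹ * xg p q i * xg p q j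
        = ((xg p q j * xg p q i)⁻¹) * (xg p q i * xg p q j) := by group
      _ = ((xg p q j * xg p q i)⁻¹) * (xg p q j * xg p q i) := by rw [h]
      _ = 1 := by group
  · simp only [map_mul, map_zpow, FreeGroup.lift_apply_of, fphi, Sum.elim_inr]
    exact polyG p q hng hp hq i
  · simp only [map_mul, map_inv, FreeGroup.lift_apply_of, fphi, Sum.elim_inl, Sum.elim_inr]
    exact mul_inv_eq_one.mpr (shiftG p q hng hp hq i)

def gpsi : Fin 3 → Hpq p q := ![XH p q (-1) ^ q * XH p q 0 ^ (-q), XH p q 0, tauH p q]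

lemma gpsi0 : gpsi p q 0 = XH p q (-1) ^ q * XH p q 0 ^ (-q) := rfl
lemma gpsi1 : gpsi p q 1 = XH p q 0 := rfl
lemma gpsi2 : gpsi p q 2 = tauH p q := rfl

lemma e1H : tauH p q * XH p q (-1) * (tauH p q)⁻¹ = XH p q 0 := by
  simpa using h3 p q (-1)

lemma e2H : tauH p q * XH p q 0 * (tauH p q)⁻¹ = XH p q 1 := by
  simpa using h3 p q 0

lemma E4H : XH p q 1 ^ (-(p * q)) = XH p q 0 ^ (-(2 * p * q + 1)) * XH p q (-1) ^ (p * q) := by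
  have h : XH p q 1 ^ (p * q) * XH p q 0 ^ (-(2 * p * q + 1)) * XH p q (-1) ^ (p * q) = 1 := by
    simpa using h2rel p q 0
  calc XH p q 1 ^ (-(p * q))
      = XH p q 1 ^ (-(p * q)) *
        (XH p q 1 ^ (p * q) * XH p q 0 ^ (-(2 * p * q + 1)) * XH p q (-1) ^ (p * q)) := by
        rw [h, mul_one]
    _ = XH p q 0 ^ (-(2 * p * q + 1)) * XH p q (-1) ^ (p * q) := by group

lemma hpsi : ∀ r ∈ gpqRels p q, FreeGroup.lift (gpsi p q) r = 1 := by
  intro r hr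
  simp only [gpqRels, Set.mem_insert_iff, Set.mem_singleton_iff] at hr
  rcases hr with rfl | rfl | rfl
  · -- first relator
    simp only [map_mul, map_zpow, map_inv, FreeGroup.lift_apply_of, gpsi0, gpsi1, gpsi2]
    apply mul_inv_eq_one.mpr
    have eA : tauH p q * (XH p q (-1) ^ q * XH p q 0 ^ (-q)) * (tauH p q)⁻¹ =
        XH p q 0 ^ q * XH p q 1 ^ (-q) := by
      calc tauH p q * (XH p q (-1) ^ q * XH p q 0 ^ (-q)) * (tauH p q)⁻¹
          = (tauH p q * XH p q (-1) * (tauH p q)⁻¹) ^ q *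
            (tauH p q * XH p q 0 * (tauH p q)⁻¹) ^ (-q) := by
            rw [conj_zpow, conj_zpow]; group
        _ = XH p q 0 ^ q * XH p q 1 ^ (-q) := by rw [e1H, e2H]
    have eAp : tauH p q * (XH p q (-1) ^ q * XH p q 0 ^ (-q)) ^ p * (tauH p q)⁻¹ =
        (XH p q 0 ^ q * XH p q 1 ^ (-q)) ^ p := by
      rw [← conj_zpow, eA]
    rw [eAp]
    have hc01 : Commute (XH p q 0 ^ q) (XH p q 1 ^ (-q)) := (h1 p q 0 1).zpow_zpow q (-q)
    have hcm0 : Commute (XH p q (-1) ^ q) (XH p q 0 ^ (-q)) := (h1 p q (-1) 0).zpow_zpow q (-q)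
    have L : (XH p q 0 ^ q * XH p q 1 ^ (-q)) ^ p =
        XH p q 0 ^ (p * q) * XH p q 1 ^ (-(p * q)) := by
      rw [hc01.mul_zpow, ← zpow_mul, ← zpow_mul]
      congr 1 <;> ring
    have R : (XH p q (-1) ^ q * XH p q 0 ^ (-q)) ^ p =
        XH p q (-1) ^ (p * q) * XH p q 0 ^ (-(p * q)) := by
      rw [hcm0.mul_zpow, ← zpow_mul, ← zpow_mul]
      congr 1 <;> ring
    rw [L, R, E4H]
    have hsw : Commute (XH p q (-1) ^ (p * q)) (XH p q 0 ^ (-(p * q))) :=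
      (h1 p q (-1) 0).zpow_zpow _ _
    calc XH p q 0 ^ (p * q) * (XH p q 0 ^ (-(2 * p * q + 1)) * XH p q (-1) ^ (p * q))
        = (XH p q 0)⁻¹ * (XH p q 0 ^ (-(p * q)) * XH p q (-1) ^ (p * q)) := by group
      _ = (XH p q 0)⁻¹ * (XH p q (-1) ^ (p * q) * XH p q 0 ^ (-(p * q))) := by rw [← hsw.eq]
  · -- second relator
    simp only [map_mul, map_zpow, map_inv, FreeGroup.lift_apply_of, gpsi0, gpsi1, gpsi2]
    have s1 : XH p q 0 ^ (-q) * (XH p q (-1) ^ q * XH p q 0 ^ (-q))⁻¹ = XH p q (-1) ^ (-q) := by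
      group
    have s2 : tauH p q * XH p q (-1) ^ (-q) * (tauH p q)⁻¹ = XH p q 0 ^ (-q) := by
      rw [← conj_zpow, e1H]
    calc tauH p q * XH p q 0 ^ (-q) * (XH p q (-1) ^ q * XH p q 0 ^ (-q))⁻¹ * (tauH p q)⁻¹ *
          (XH p q 0 ^ (-q))⁻¹
        = tauH p q * (XH p q 0 ^ (-q) * (XH p q (-1) ^ q * XH p q 0 ^ (-q))⁻¹) * (tauH p q)⁻¹ *
          (XH p q 0 ^ (-q))⁻¹ := by group
      _ = tauH p q * XH p q (-1) ^ (-q) * (tauH p q)⁻¹ * (XH p q 0 ^ (-q))⁻¹ := by rw [s1]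
      _ = XH p q 0 ^ (-q) * (XH p q 0 ^ (-q))⁻¹ := by rw [s2]
      _ = 1 := by group
  · -- third relator
    simp only [map_mul, map_zpow, map_inv, FreeGroup.lift_apply_of, gpsi0, gpsi1, gpsi2]
    have hA : Commute (XH p q 0) (XH p q (-1) ^ q * XH p q 0 ^ (-q)) :=
      Commute.mul_right ((h1 p q 0 (-1)).zpow_right q) ((Commute.refl (XH p q 0)).zpow_right (-q))
    have hc : Commute (XH p q 0 ^ q) ((XH p q (-1) ^ q * XH p q 0 ^ (-q)) ^ p) :=
      hA.zpow_zpow q p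
    calc (XH p q 0 ^ q)⁻¹ * ((XH p q (-1) ^ q * XH p q 0 ^ (-q)) ^ p)⁻¹ * XH p q 0 ^ q *
          (XH p q (-1) ^ q * XH p q 0 ^ (-q)) ^ p
        = ((XH p q (-1) ^ q * XH p q 0 ^ (-q)) ^ p * XH p q 0 ^ q)⁻¹ *
          (XH p q 0 ^ q * (XH p q (-1) ^ q * XH p q 0 ^ (-q)) ^ p) := by group
      _ = ((XH p q (-1) ^ q * XH p q 0 ^ (-q)) ^ p * XH p q 0 ^ q)⁻¹ *
          ((XH p q (-1) ^ q * XH p q 0 ^ (-q)) ^ p * XH p q 0 ^ q) := by rw [hc.eq]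
      _ = 1 := by group

def phiG : Hpq p q →* Gpq p q := PresentedGroup.toGroup (hphi p q hng hp hq)

def psiG : Gpq p q →* Hpq p q := PresentedGroup.toGroup (hpsi p q)

lemma compHH : (psiG p q).comp (phiG p q hng hp hq) = MonoidHom.id (Hpq p q) := by
  refine PresentedGroup.ext fun x => ?_
  cases x with
  | inl u =>
    cases u
    show psiG p q (phiG p q hng hp hq (PresentedGroup.of (Sum.inl ()))) = _
    rw [phiG, PresentedGroup.toGroup.of]
    show psiG p q (tt p q) = _
    rw [tt, psiG, PresentedGroup.toGroup.of, gpsi2]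
    rfl
  | inr n =>
    show psiG p q (phiG p q hng hp hq (PresentedGroup.of (Sum.inr n))) = _
    rw [phiG, PresentedGroup.toGroup.of]
    show psiG p q (xg p q n) = _
    rw [xg, map_mul, map_mul, map_zpow, map_zpow]
    rw [tt, tb, psiG, PresentedGroup.toGroup.of, PresentedGroup.toGroup.of, gpsi2, gpsi1]
    rw [h4 p q n 0, zero_add]
    rfl

lemma compGG : (phiG p q hng hp hq).comp (psiG p q) = MonoidHom.id (Gpq p q) := by
  refine PresentedGroup.ext fun x => ?_
  fin_cases x
  · show phiG p q hng hp hq (psiG p q (PresentedGroup.of 0)) = _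
    rw [psiG, PresentedGroup.toGroup.of, gpsi0]
    rw [map_mul, map_zpow, map_zpow]
    rw [XH, XH, phiG, PresentedGroup.toGroup.of, PresentedGroup.toGroup.of]
    show xg p q (-1) ^ q * xg p q 0 ^ (-q) = _
    have := d1 p q 0
    rw [show (0 : ℤ) - 1 = -1 by ring] at this
    rw [← this, ag0]
    rfl
  · show phiG p q hng hp hq (psiG p q (PresentedGroup.of 1)) = _
    rw [psiG, PresentedGroup.toGroup.of, gpsi1, XH, phiG, PresentedGroup.toGroup.of]
    show xg p q 0 = _
    rw [xg0]
    rfl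
  · show phiG p q hng hp hq (psiG p q (PresentedGroup.of 2)) = _
    rw [psiG, PresentedGroup.toGroup.of, gpsi2, tauH, phiG, PresentedGroup.toGroup.of]
    rfl

end Iso
end HisoAux


/-- if `p, q > 0` and `G_{p,q}` has no generalized torsion elements, then
there is an isomorphism `H_{p,q} ≃* G_{p,q}` sending `τ` to `t` and `x_n` to
`t^n b t^{-n}` for every `n`. -/
theorem hpq_iso_gpq (p q : ℤ) (hp : 0 < p) (hq : 0 < q)
    (hng : ¬ HasGenTorsion (Gpq p q)) :
    letI b : Gpq p q := PresentedGroup.of 1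
    letI t : Gpq p q := PresentedGroup.of 2
    ∃ φ : Hpq p q ≃* Gpq p q,
      φ (PresentedGroup.of (Sum.inl ())) = t ∧
      ∀ n : ℤ, φ (PresentedGroup.of (Sum.inr n)) = t ^ n * b * t ^ (-n) := by
  refine ⟨MonoidHom.toMulEquiv (HisoAux.phiG p q hng hp hq) (HisoAux.psiG p q)
    (HisoAux.compHH p q hng hp hq) (HisoAux.compGG p q hng hp hq), ?_, ?_⟩
  · show HisoAux.phiG p q hng hp hq (PresentedGroup.of (Sum.inl ())) = _
    rw [HisoAux.phiG, PresentedGroup.toGroup.of]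
    rfl
  · intro n
    show HisoAux.phiG p q hng hp hq (PresentedGroup.of (Sum.inr n)) = _
    rw [HisoAux.phiG, PresentedGroup.toGroup.of]
    rfl
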